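/- If $\alpha \ne 0$, then $\Lambda_6 = \frac{3}{2\alpha}\left(\omega\Lambda_2 - \frac{3}{4}\Lambda_4\right)$; equivalently, $\frac{2}{3}\alpha\Lambda_6 = \omega\Lambda_2 - \frac{3}{4}\Lambda_4$. -/

import Mathlib

open MeasureTheory

section Aux
open Real Filter Topology

theorem int_exp_abs {a : ℝ} (ha : 0 < a) : Integrable (fun x : ℝ => Real.exp (-(a * |x|))) := by
  have h1 : Integrable (fun x : ℝ => Real.exp (-|x|)) := by
    have hIic : IntegrableOn (fun x : ℝ => Real.exp (-|x|)) (Set.Iic 0) := by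
      apply (integrableOn_exp_Iic 0).congr_fun ?_ measurableSet_Iic
      intro x hx
      simp [abs_of_nonpos (Set.mem_Iic.mp hx)]
    have hIoi : IntegrableOn (fun x : ℝ => Real.exp (-|x|)) (Set.Ioi 0) := by
      have hd : ∀ x ∈ Set.Ici (0:ℝ), HasDerivAt (fun x : ℝ => -Real.exp (-x)) (Real.exp (-x)) x := by
        intro x _
        simpa [Function.comp_def, Pi.neg_def] using ((Real.hasDerivAt_exp (-x)).comp x (hasDerivAt_neg x)).neg
      have ht : Tendsto (fun x : ℝ => -Real.exp (-x)) atTop (𝓝 0) := by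
        rw [show (0:ℝ) = -0 by ring]
        exact (Real.tendsto_exp_neg_atTop_nhds_zero).neg
      have : IntegrableOn (fun x : ℝ => Real.exp (-x)) (Set.Ioi 0) :=
        integrableOn_Ioi_deriv_of_nonneg' hd (fun x _ => (Real.exp_pos _).le) ht
      apply this.congr_fun ?_ measurableSet_Ioi
      intro x hx
      simp [abs_of_pos (Set.mem_Ioi.mp hx)]
    rw [← integrableOn_univ, ← Set.Iic_union_Ioi (a := (0:ℝ))]
    exact hIic.union hIoi
  have h2 := h1.comp_mul_left' (R := a) ha.ne'
  refine h2.congr (Eventually.of_forall fun x => ?_)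
  simp [abs_mul, abs_of_pos ha]

theorem deriv_key (a c β : ℝ) (hc : 0 < c) (hc2 : c^2 = 1 - β) :
    ∀ x : ℝ, HasDerivAt (fun x : ℝ => Real.sinh (a*x) / (1 + c * Real.cosh (a*x))^2)
      (-(a/c) * ((1 + c * Real.cosh (a*x))⁻¹ - 3*(1 + c * Real.cosh (a*x))⁻¹^2
        + 2*β*(1 + c * Real.cosh (a*x))⁻¹^3)) x := by
  intro x
  have hD : 0 < 1 + c * Real.cosh (a*x) := by
    have := Real.one_le_cosh (a*x); nlinarith
  have h1 : HasDerivAt (fun x : ℝ => Real.sinh (a*x)) (a * Real.cosh (a*x)) x := by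
    simpa [mul_comm, Function.comp_def] using (Real.hasDerivAt_sinh (a*x)).comp x ((hasDerivAt_id x).const_mul a)
  have h2 : HasDerivAt (fun x : ℝ => (1 + c * Real.cosh (a*x))^2)
      (2 * (1 + c * Real.cosh (a*x)) * (c * (a * Real.sinh (a*x)))) x := by
    have hcosh : HasDerivAt (fun x : ℝ => Real.cosh (a*x)) (a * Real.sinh (a*x)) x := by
      simpa [mul_comm, Function.comp_def] using (Real.hasDerivAt_cosh (a*x)).comp x ((hasDerivAt_id x).const_mul a)
    have := ((hcosh.const_mul c).const_add 1).pow 2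
    refine this.congr_deriv ?_; ring
  have := h1.div h2 (by positivity)
  refine this.congr_deriv ?_
  have hβ : β = 1 - c^2 := by linarith
  have hss : Real.sinh (a*x) ^ 2 = Real.cosh (a*x)^2 - 1 := by
    have := Real.cosh_sq (a*x); linarith
  have e2 : Real.sinh (a*x) * (2 * (1 + c * Real.cosh (a*x)) * (c * (a * Real.sinh (a*x))))
      = 2 * (1 + c * Real.cosh (a*x)) * c * a * (Real.cosh (a*x)^2 - 1) := by
    rw [← hss]; ring
  rw [e2, hβ]
  field_simp
  ring

/-- The key integral identity `∫ D⁻¹ - 3 ∫ D⁻² + 2β ∫ D⁻³ = 0`. -/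
theorem key_identity (a c β : ℝ) (ha : 0 < a) (hc : 0 < c) (hc1 : c ≤ 1) (hc2 : c^2 = 1 - β) :
    (∫ x : ℝ, (1 + c * Real.cosh (a*x))⁻¹) - 3 * (∫ x : ℝ, (1 + c * Real.cosh (a*x))⁻¹^2)
      + 2*β*(∫ x : ℝ, (1 + c * Real.cosh (a*x))⁻¹^3) = 0 ∧
    (∀ n : ℕ, Integrable (fun x : ℝ => (1 + c * Real.cosh (a*x))⁻¹^(n+1))) := by
  set D : ℝ → ℝ := fun x => 1 + c * Real.cosh (a*x) with hDdef
  have hD1 : ∀ x, 1 ≤ D x := fun x => by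
    simp only [hDdef]
    have := Real.one_le_cosh (a*x); nlinarith
  have hDpos : ∀ x, 0 < D x := fun x => lt_of_lt_of_le one_pos (hD1 x)
  have hcont : Continuous D := by
    continuity
  -- bound : D x ≥ (c/2) exp (a|x|)
  have hDbig : ∀ x, c/2 * Real.exp (a*|x|) ≤ D x := by
    intro x
    have h1 : Real.exp (a*|x|) ≤ Real.exp (a*x) + Real.exp (-(a*x)) := by
      rcases abs_cases x with ⟨h, _⟩ | ⟨h, _⟩
      · rw [h]; nlinarith [Real.exp_pos (-(a*x))]
      · rw [h]; rw [show a * -x = -(a*x) by ring]; nlinarith [Real.exp_pos (a*x)]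
    have h2 : Real.cosh (a*x) = (Real.exp (a*x) + Real.exp (-(a*x)))/2 := Real.cosh_eq _
    have : c/2 * Real.exp (a*|x|) ≤ c * Real.cosh (a*x) := by
      rw [h2]; nlinarith
    simp only [hDdef]; linarith
  have hinv : ∀ x, (D x)⁻¹ ≤ (2/c) * Real.exp (-(a*|x|)) := by
    intro x
    rw [Real.exp_neg]
    rw [show (2/c) * (Real.exp (a*|x|))⁻¹ = (c/2 * Real.exp (a*|x|))⁻¹ by
      rw [mul_inv]; field_simp]
    exact inv_anti₀ (by positivity) (hDbig x)
  have hint : ∀ n : ℕ, Integrable (fun x : ℝ => (D x)⁻¹^(n+1)) := by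
    intro n
    apply Integrable.mono' ((int_exp_abs ha).const_mul (2/c))
    · exact ((hcont.inv₀ (fun x => (hDpos x).ne')).pow _).aestronglyMeasurable
    · refine Eventually.of_forall fun x => ?_
      have h0 : 0 < (D x)⁻¹ := inv_pos.mpr (hDpos x)
      have hle1 : (D x)⁻¹ ≤ 1 := by
        rw [inv_le_one_iff₀]; right; exact hD1 x
      have : (D x)⁻¹^(n+1) ≤ (D x)⁻¹ := by
        calc (D x)⁻¹^(n+1) ≤ (D x)⁻¹^1 := pow_le_pow_of_le_one h0.le hle1 (by omega)
        _ = (D x)⁻¹ := pow_one _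
      rw [Real.norm_eq_abs, abs_of_pos (pow_pos h0 _)]
      exact this.trans (hinv x)
  refine ⟨?_, hint⟩
  -- the function g and its derivative
  set g : ℝ → ℝ := fun x => Real.sinh (a*x) / (D x)^2 with hgdef
  set h : ℝ → ℝ := fun x => (D x)⁻¹ - 3*(D x)⁻¹^2 + 2*β*(D x)⁻¹^3 with hhdef
  have hderiv : ∀ x, HasDerivAt g (-(a/c) * h x) x := deriv_key a c β hc hc2
  have hinth : Integrable h := by
    have := ((hint 0).sub ((hint 1).const_mul 3)).add ((hint 2).const_mul (2*β))
    refine this.congr (Eventually.of_forall fun x => ?_)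
    simp [hhdef]
  -- tendsto of g at ±∞
  have hexp2 : ∀ x : ℝ, Real.exp (a*|x|) ≤ 2 * Real.cosh (a*x) := by
    intro x
    rw [Real.cosh_eq]
    rcases abs_cases x with ⟨h, _⟩ | ⟨h, _⟩
    · rw [h]; nlinarith [Real.exp_pos (-(a*x))]
    · rw [h, show a * -x = -(a*x) by ring]; nlinarith [Real.exp_pos (a*x)]
  have hgbound : ∀ x, ‖g x‖ ≤ (2/c^2) * Real.exp (-(a*|x|)) := by
    intro x
    have hch : 0 < Real.cosh (a*x) := Real.cosh_pos _
    have h1 : |Real.sinh (a*x)| ≤ Real.cosh (a*x) := by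
      rw [abs_le]
      refine ⟨?_, (Real.sinh_lt_cosh (a*x)).le⟩
      have := Real.sinh_lt_cosh (-(a*x))
      rw [Real.sinh_neg, Real.cosh_neg] at this
      linarith
    have h3 : (c * Real.cosh (a*x))^2 ≤ (D x)^2 := by
      have h2 : c * Real.cosh (a*x) ≤ D x := by
        simp only [hDdef]; linarith
      apply sq_le_sq' <;> nlinarith [hDpos x]
    have hstep : ‖g x‖ ≤ 1/(c^2 * Real.cosh (a*x)) := by
      rw [hgdef]
      simp only [norm_div, Real.norm_eq_abs, abs_pow, abs_of_pos (hDpos x)]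
      rw [div_le_div_iff₀ (by positivity) (by positivity)]
      calc |Real.sinh (a*x)| * (c^2 * Real.cosh (a*x)) 
          = (c * Real.cosh (a*x))^2 * (|Real.sinh (a*x)| / Real.cosh (a*x)) := by
            field_simp
        _ ≤ (D x)^2 * 1 := by
            apply mul_le_mul h3 ?_ (by positivity) (by positivity)
            rw [div_le_one hch]; exact h1
        _ = 1 * (D x)^2 := by ring
    refine hstep.trans ?_
    rw [Real.exp_neg, div_le_iff₀ (by positivity)]
    rw [show 2/c^2 * (Real.exp (a*|x|))⁻¹ * (c^2 * Real.cosh (a*x)) 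
        = (2 * Real.cosh (a*x)) * (Real.exp (a*|x|))⁻¹ by field_simp]
    rw [le_mul_inv_iff₀ (Real.exp_pos _), one_mul]
    exact hexp2 x
  have hbnd_top : Tendsto (fun x : ℝ => (2/c^2) * Real.exp (-(a*|x|))) atTop (𝓝 0) := by
    rw [show (0:ℝ) = (2/c^2) * 0 by ring]
    apply Tendsto.const_mul
    apply Real.tendsto_exp_atBot.comp
    apply Filter.tendsto_neg_atBot_iff.mpr
    exact (tendsto_abs_atTop_atTop.const_mul_atTop ha)
  have hbnd_bot : Tendsto (fun x : ℝ => (2/c^2) * Real.exp (-(a*|x|))) atBot (𝓝 0) := by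
    rw [show (0:ℝ) = (2/c^2) * 0 by ring]
    apply Tendsto.const_mul
    apply Real.tendsto_exp_atBot.comp
    apply Filter.tendsto_neg_atBot_iff.mpr
    exact (tendsto_abs_atBot_atTop.const_mul_atTop ha)
  have hgtop : Tendsto g atTop (𝓝 0) := squeeze_zero_norm hgbound hbnd_top
  have hgbot : Tendsto g atBot (𝓝 0) := squeeze_zero_norm hgbound hbnd_bot
  have hzero : ∫ x : ℝ, -(a/c) * h x = 0 := by
    rw [MeasureTheory.integral_of_hasDerivAt_of_tendsto hderiv (hinth.const_mul _) hgbot hgtop]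
    ring
  rw [MeasureTheory.integral_const_mul] at hzero
  have hac : -(a/c) ≠ 0 := neg_ne_zero.mpr (by positivity)
  have hinth0 : ∫ x : ℝ, h x = 0 := by
    rcases mul_eq_zero.mp hzero with h' | h'
    · exact absurd h' hac
    · exact h'
  simp only [hhdef] at hinth0
  have i1 : Integrable (fun x : ℝ => (D x)⁻¹) := by simpa using hint 0
  have i2 : Integrable (fun x : ℝ => 3 * (D x)⁻¹^2) := by
    simpa using (hint 1).const_mul 3
  have i3 : Integrable (fun x : ℝ => 2*β*(D x)⁻¹^3) := by
    simpa using (hint 2).const_mul (2*β)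
  have i12 : Integrable (fun x : ℝ => (D x)⁻¹ - 3 * (D x)⁻¹^2) := i1.sub i2
  rw [MeasureTheory.integral_add i12 i3, MeasureTheory.integral_sub i1 i2,
    MeasureTheory.integral_const_mul, MeasureTheory.integral_const_mul] at hinth0
  exact hinth0

end Aux

open Real Filter Topology in
/-- If `α ≠ 0` then `Λ₆ = (3/(2α)) (ω Λ₂ - (3/4) Λ₄)`; equivalently
`(2/3) α Λ₆ = ω Λ₂ - (3/4) Λ₄`. -/
theorem stmt4 (ω α β : ℝ) (hω : 0 < ω) (hβ : β = -(16 / 3) * α * ω)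
    (hβ0 : 0 ≤ β) (hβ1 : β < 1) (hα : α ≠ 0)
    (R0 : ℝ → ℝ)
    (hR0 : ∀ z : ℝ, R0 z =
      Real.sqrt (4 * ω / (1 + Real.sqrt (1 - β) * Real.cosh (2 * Real.sqrt ω * z)))) :
    (∫ s : ℝ, (R0 s) ^ 6) =
      (3 / (2 * α)) * (ω * (∫ s : ℝ, (R0 s) ^ 2) - (3 / 4) * ∫ s : ℝ, (R0 s) ^ 4) ∧
    (2 / 3) * α * (∫ s : ℝ, (R0 s) ^ 6) =
      ω * (∫ s : ℝ, (R0 s) ^ 2) - (3 / 4) * ∫ s : ℝ, (R0 s) ^ 4 := by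
  set a : ℝ := 2 * Real.sqrt ω with hadef
  set c : ℝ := Real.sqrt (1 - β) with hcdef
  have ha : 0 < a := by
    have := Real.sqrt_pos.mpr hω; simp only [hadef]; linarith
  have hc : 0 < c := Real.sqrt_pos.mpr (by linarith)
  have hc1 : c ≤ 1 := by
    have := Real.sqrt_le_sqrt (show 1 - β ≤ 1 by linarith)
    rwa [Real.sqrt_one] at this
  have hc2 : c^2 = 1 - β := Real.sq_sqrt (by linarith)
  obtain ⟨E, hint⟩ := key_identity a c β ha hc hc1 hc2
  have hDpos : ∀ z : ℝ, 0 < 1 + c * Real.cosh (a*z) := by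
    intro z
    have h1 := Real.one_le_cosh (a*z)
    nlinarith
  have hsq : ∀ z : ℝ, R0 z ^ 2 = (4*ω) * (1 + c * Real.cosh (a*z))⁻¹ := by
    intro z
    rw [hR0 z, Real.sq_sqrt (by positivity : (0:ℝ) ≤ 4 * ω / (1 + Real.sqrt (1-β) * Real.cosh (2 * Real.sqrt ω * z)))]
    rw [div_eq_mul_inv]
  have hsq4 : ∀ z : ℝ, R0 z ^ 4 = (4*ω)^2 * (1 + c * Real.cosh (a*z))⁻¹^2 := by
    intro z
    rw [show R0 z ^ 4 = (R0 z ^ 2)^2 by ring, hsq z]; ring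
  have hsq6 : ∀ z : ℝ, R0 z ^ 6 = (4*ω)^3 * (1 + c * Real.cosh (a*z))⁻¹^3 := by
    intro z
    rw [show R0 z ^ 6 = (R0 z ^ 2)^3 by ring, hsq z]; ring
  have e2 : (∫ s : ℝ, R0 s ^ 2) = (4*ω) * ∫ x : ℝ, (1 + c * Real.cosh (a*x))⁻¹ := by
    simp_rw [hsq]; rw [MeasureTheory.integral_const_mul]
  have e4 : (∫ s : ℝ, R0 s ^ 4) = (4*ω)^2 * ∫ x : ℝ, (1 + c * Real.cosh (a*x))⁻¹^2 := by
    simp_rw [hsq4]; rw [MeasureTheory.integral_const_mul]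
  have e6 : (∫ s : ℝ, R0 s ^ 6) = (4*ω)^3 * ∫ x : ℝ, (1 + c * Real.cosh (a*x))⁻¹^3 := by
    simp_rw [hsq6]; rw [MeasureTheory.integral_const_mul]
  rw [e2, e4, e6]
  set J1 := ∫ x : ℝ, (1 + c * Real.cosh (a*x))⁻¹
  set J2 := ∫ x : ℝ, (1 + c * Real.cosh (a*x))⁻¹^2
  set J3 := ∫ x : ℝ, (1 + c * Real.cosh (a*x))⁻¹^3
  subst hβ
  constructor
  · field_simp
    linear_combination (-3) * E
  · linear_combination (-4 * ω^2) * E
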